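/- Let v_1,...,v_n be vectors in C^m such that any m cyclically consecutive vectors form a basis. Define ξ_i := ⋆(v_{n-i+2} ∧ v_{n-i+3} ∧ ... ∧ v_{n-i+m}) ∈ C^m (indices mod n), using the Hodge star with respect to the standard inner product. Then ξ_1,...,ξ_m form a basis of C^m. -/

import Mathlib

/-- The Hodge star of the wedge `w 0 ∧ … ∧ w (m-2)` of `m-1` vectors in `ℂ^m`
(with respect to the standard bilinear inner product and volume form): its `k`-th
coordinate is the determinant of the matrix with first row `e_k` and remaining
rows `w 0, …, w (m-2)`, so that `⟨hodge w, v⟩ = det (v ∧ w 0 ∧ … ∧ w (m-2))`. -/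
noncomputable def hodge (m : ℕ) (w : Fin (m - 1) → Fin m → ℂ) : Fin m → ℂ := fun k =>
  Matrix.det (Matrix.of fun r c : Fin m =>
    if hr : (r : ℕ) = 0 then (if c = k then 1 else 0)
    else w ⟨(r : ℕ) - 1, by have := r.isLt; omega⟩ c)

/-- `ξ_i := ⋆(v_{n-i+2} ∧ … ∧ v_{n-i+m})`, indices mod `n`. -/
noncomputable def xiVec (m n : ℕ) (v : ZMod n → Fin m → ℂ) (i : ZMod n) : Fin m → ℂ :=
  hodge m fun j : Fin (m - 1) => v (2 - i + ((j : ℕ) : ZMod n))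

/-- Pairing the Hodge star against a vector gives a full determinant. -/
lemma hodge_pair (m : ℕ) (hm : 0 < m) (w : Fin (m - 1) → Fin m → ℂ) (u : Fin m → ℂ) :
    ∑ k, hodge m w k * u k =
      Matrix.det (Matrix.of fun r c : Fin m =>
        if hr : (r : ℕ) = 0 then u c
        else w ⟨(r : ℕ) - 1, by have := r.isLt; omega⟩ c) := by
  classical
  set i0 : Fin m := ⟨0, hm⟩ with hi0
  set M : Matrix (Fin m) (Fin m) ℂ := Matrix.of fun r c =>
      if hr : (r : ℕ) = 0 then (0 : ℂ)
      else w ⟨(r : ℕ) - 1, by have := r.isLt; omega⟩ c with hM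
  have key : ∀ u : Fin m → ℂ, (Matrix.of fun r c : Fin m =>
        if hr : (r : ℕ) = 0 then u c
        else w ⟨(r : ℕ) - 1, by have := r.isLt; omega⟩ c) = M.updateRow i0 u := by
    intro u
    ext r c
    by_cases h : r = i0
    · subst h
      simp [M]
      exact fun h => absurd rfl h
    · have h0 : (r : ℕ) ≠ 0 := fun hh => h (Fin.ext hh)
      simp [M, Matrix.updateRow_apply, h, h0]
  have hodge_eq : ∀ k, hodge m w k = (M.updateRow i0 (Pi.single k 1)).det := by
    intro k
    have : (Matrix.of fun r c : Fin m =>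
        if hr : (r : ℕ) = 0 then (if c = k then (1:ℂ) else 0)
        else w ⟨(r : ℕ) - 1, by have := r.isLt; omega⟩ c) =
        M.updateRow i0 (Pi.single k 1) := by
      rw [← key (Pi.single k 1)]
      ext r c
      by_cases h : (r : ℕ) = 0 <;> simp [h, Pi.single_apply]
    rw [hodge, this]
  let L : (Fin m → ℂ) →ₗ[ℂ] ℂ :=
    { toFun := fun x => (M.updateRow i0 x).det
      map_add' := fun x y => Matrix.det_updateRow_add M i0 x y
      map_smul' := fun s x => by
        simpa using Matrix.det_updateRow_smul M i0 s x }
  have hu : u = ∑ k, u k • (Pi.single k (1 : ℂ) : Fin m → ℂ) := by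
    ext j
    simp [Finset.sum_apply, Pi.single_apply]
  rw [key u]
  show ∑ k, hodge m w k * u k = L u
  conv_rhs => rw [hu]
  rw [map_sum]
  simp only [map_smul, smul_eq_mul]
  refine Finset.sum_congr rfl fun k _ => ?_
  rw [hodge_eq k]
  show (M.updateRow i0 (Pi.single k 1)).det * u k = u k * L (Pi.single k 1)
  have : L (Pi.single k 1) = (M.updateRow i0 (Pi.single k 1)).det := rfl
  rw [this]
  ring

/-- If any `m` cyclically consecutive vectors of `v_1,…,v_n` are linearly independent,
then `ξ_1, …, ξ_m` form a basis of `ℂ^m`. -/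
theorem stmt_3 (m n : ℕ) (hm : 1 < m) (hn : m + 1 < n)
    (v : ZMod n → Fin m → ℂ)
    (hgen : ∀ i : ZMod n, LinearIndependent ℂ (fun j : Fin m => v (i + ((j : ℕ) : ZMod n)))) :
    LinearIndependent ℂ (fun i : Fin m => xiVec m n v (((i : ℕ) : ZMod n) + 1)) ∧
    Submodule.span ℂ (Set.range fun i : Fin m => xiVec m n v (((i : ℕ) : ZMod n) + 1)) = ⊤ := by
  classical
  have hm0 : 0 < m := by omega
  -- the pairing matrix
  set ξ : Fin m → Fin m → ℂ := fun i => xiVec m n v (((i : ℕ) : ZMod n) + 1) with hξ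
  set N : Matrix (Fin m) (Fin m) ℂ := Matrix.of fun i j =>
    ∑ k, ξ i k * v (-((j : ℕ) : ZMod n)) k with hN
  have hNdet : ∀ i j : Fin m, N i j = Matrix.det (Matrix.of fun r c : Fin m =>
      if hr : (r : ℕ) = 0 then v (-((j : ℕ) : ZMod n)) c
      else v (1 - ((i : ℕ) : ZMod n) + (((r : ℕ) - 1 : ℕ) : ZMod n)) c) := by
    intro i j
    have := hodge_pair m hm0
      (fun j' : Fin (m - 1) => v (2 - (((i : ℕ) : ZMod n) + 1) + ((j' : ℕ) : ZMod n)))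
      (v (-((j : ℕ) : ZMod n)))
    have h2 : ∀ x : ZMod n, 2 - (((i : ℕ) : ZMod n) + 1) + x
        = 1 - ((i : ℕ) : ZMod n) + x := by intro x; ring
    show ∑ k, hodge m (fun j' : Fin (m - 1) =>
        v (2 - (((i : ℕ) : ZMod n) + 1) + ((j' : ℕ) : ZMod n))) k * v (-((j : ℕ) : ZMod n)) k = _
    rw [this]
    congr 1
    ext r c
    by_cases h : (r : ℕ) = 0 <;> simp [h, h2]
  -- diagonal entries are nonzero
  have hdiag : ∀ i : Fin m, N i i ≠ 0 := by
    intro i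
    rw [hNdet i i]
    have hmat : (Matrix.of fun r c : Fin m =>
        if hr : (r : ℕ) = 0 then v (-((i : ℕ) : ZMod n)) c
        else v (1 - ((i : ℕ) : ZMod n) + (((r : ℕ) - 1 : ℕ) : ZMod n)) c) =
        Matrix.of (fun r c : Fin m => v (-((i : ℕ) : ZMod n) + ((r : ℕ) : ZMod n)) c) := by
      ext r c
      by_cases h : (r : ℕ) = 0
      · simp only [Matrix.of_apply]
        rw [dif_pos h, h]
        simp
      · have h1 : 1 ≤ (r : ℕ) := by omega
        have hcast : (((r : ℕ) - 1 : ℕ) : ZMod n) = ((r : ℕ) : ZMod n) - 1 := by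
          push_cast [Nat.cast_sub h1]; ring
        simp only [Matrix.of_apply, dif_neg h, hcast]
        congr 1
        ring
    rw [hmat]
    have hli : LinearIndependent ℂ
        (fun r : Fin m => (Matrix.of (fun r c : Fin m =>
          v (-((i : ℕ) : ZMod n) + ((r : ℕ) : ZMod n)) c)) r) := hgen (-((i : ℕ) : ZMod n))
    have := Matrix.linearIndependent_rows_iff_isUnit.mp hli
    have := (Matrix.isUnit_iff_isUnit_det _).mp this
    exact this.ne_zero
  -- strict lower part vanishes
  have htri : N.BlockTriangular id := by
    intro i j hij
    rw [hNdet i j]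
    have hij' : (j : ℕ) < (i : ℕ) := hij
    set s : Fin m := ⟨(i : ℕ) - (j : ℕ), by omega⟩ with hs
    have hs0 : (⟨0, hm0⟩ : Fin m) ≠ s := by
      intro h
      have := congrArg Fin.val h
      simp [hs] at this
      omega
    refine Matrix.det_zero_of_row_eq hs0 ?_
    ext c
    have hsv : (s : ℕ) = (i : ℕ) - (j : ℕ) := rfl
    have hsne : (s : ℕ) ≠ 0 := by omega
    simp only [Matrix.of_apply, dif_pos, dif_neg hsne]
    congr 1
    have h1 : (i : ℕ) - (j : ℕ) - 1 = (i : ℕ) - ((j : ℕ) + 1) := by omega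
    have hcast : ((((i : ℕ) - (j : ℕ) - 1 : ℕ)) : ZMod n)
        = ((i : ℕ) : ZMod n) - (((j : ℕ) : ZMod n) + 1) := by
      rw [h1, Nat.cast_sub (by omega)]
      push_cast
      ring
    rw [hcast]
    ring
  -- N is invertible
  have hdet : N.det ≠ 0 := by
    rw [Matrix.det_of_upperTriangular htri]
    exact Finset.prod_ne_zero_iff.mpr fun i _ => hdiag i
  have hunit : IsUnit N := (Matrix.isUnit_iff_isUnit_det _).mpr (isUnit_iff_ne_zero.mpr hdet)
  -- linear independence
  have hindep : LinearIndependent ℂ ξ := by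
    rw [Fintype.linearIndependent_iff]
    intro c hc
    have hv : Matrix.vecMul c N = Matrix.vecMul 0 N := by
      funext j
      have hc' : ∀ k, ∑ i, c i * ξ i k = 0 := by
        intro k
        have := congrFun hc k
        simpa [Finset.sum_apply] using this
      calc Matrix.vecMul c N j = ∑ i, c i * ∑ k, ξ i k * v (-((j : ℕ) : ZMod n)) k := by
            simp [Matrix.vecMul, dotProduct, N]
        _ = ∑ k, (∑ i, c i * ξ i k) * v (-((j : ℕ) : ZMod n)) k := by
            simp_rw [Finset.mul_sum, Finset.sum_mul]
            rw [Finset.sum_comm]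
            exact Finset.sum_congr rfl fun k _ => Finset.sum_congr rfl fun i _ => by ring
        _ = 0 := by simp [hc']
        _ = Matrix.vecMul 0 N j := by simp
    have := Matrix.vecMul_injective_iff_isUnit.mpr hunit hv
    exact fun i => congrFun this i
  refine ⟨hindep, ?_⟩
  haveI : Nonempty (Fin m) := ⟨⟨0, hm0⟩⟩
  apply hindep.span_eq_top_of_card_eq_finrank
  simp [Module.finrank_fin_fun]
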